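/- With E, Φ, 𝒩 and assumptions (A₁)–(A₅) as above, the Nehari level c = inf_{u ∈ 𝒩} Φ(u) is strictly positive: there exists α > 0 with inf{Φ(u) : ‖u‖ = α} > 0, and c ≥ inf{Φ(u) : ‖u‖ = α} > 0. -/

import Mathlib

open scoped BigOperators
open Filter Topology

noncomputable section

abbrev Vtx (N : ℕ) := Fin N → ℤ

def LatAdj {N : ℕ} (x y : Vtx N) : Prop := (∑ i, |x i - y i|) = 1

instance {N : ℕ} (x y : Vtx N) : Decidable (LatAdj x y) := by
  unfold LatAdj; infer_instance

/-- `∑_x |u x|^p`. -/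
noncomputable def lpSum (N : ℕ) (p : ℝ) (u : Vtx N → ℝ) : ℝ := ∑' x, |u x| ^ p

/-- `(1/2) ∑_{x∼y} |u x − u y|^p` (sum over ordered pairs of adjacent vertices). -/
noncomputable def pEnergy (N : ℕ) (p : ℝ) (u : Vtx N → ℝ) : ℝ :=
  (1/2) * ∑' z : Vtx N × Vtx N, if LatAdj z.1 z.2 then |u z.1 - u z.2| ^ p else 0

/-- `(1/2) ∑_{x∼y} |∇_{xy}u|^{p−2} (∇_{xy}u)(∇_{xy}v)`. -/
noncomputable def gradPair (N : ℕ) (p : ℝ) (u v : Vtx N → ℝ) : ℝ :=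
  (1/2) * ∑' z : Vtx N × Vtx N,
    if LatAdj z.1 z.2 then |u z.2 - u z.1| ^ (p - 2) * (u z.2 - u z.1) * (v z.2 - v z.1) else 0

/-- discrete p-Laplacian. -/
noncomputable def pLap (N : ℕ) (p : ℝ) (u : Vtx N → ℝ) (x : Vtx N) : ℝ :=
  ∑' y, if LatAdj x y then |u y - u x| ^ (p - 2) * (u y - u x) else 0

/-- `‖u‖^p` for the potential norm. -/
noncomputable def eNormP (N : ℕ) (p : ℝ) (V : Vtx N → ℝ) (u : Vtx N → ℝ) : ℝ :=
  pEnergy N p u + ∑' x, V x * |u x| ^ p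

/-- the potential norm `‖u‖`. -/
noncomputable def eNorm (N : ℕ) (p : ℝ) (V : Vtx N → ℝ) (u : Vtx N → ℝ) : ℝ :=
  (eNormP N p V u) ^ (1/p)

/-- `F(x,t) = ∫₀^t f(x,s) ds`. -/
noncomputable def Fprim {N : ℕ} (f : Vtx N → ℝ → ℝ) (x : Vtx N) (t : ℝ) : ℝ :=
  ∫ s in (0:ℝ)..t, f x s

/-- the variational functional `Φ`. -/
noncomputable def PhiFun (N : ℕ) (p : ℝ) (V : Vtx N → ℝ) (f : Vtx N → ℝ → ℝ)
    (u : Vtx N → ℝ) : ℝ :=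
  (1/p) * eNormP N p V u - ∑' x, Fprim f x (u x)

/-- `Φ'(u)v`. -/
noncomputable def PhiDeriv (N : ℕ) (p : ℝ) (V : Vtx N → ℝ) (f : Vtx N → ℝ → ℝ)
    (u v : Vtx N → ℝ) : ℝ :=
  gradPair N p u v + (∑' x, V x * |u x| ^ (p - 2) * u x * v x) - ∑' x, f x (u x) * v x

/-- membership in `E = ℓ^p`. -/
def memE (N : ℕ) (p : ℝ) (u : Vtx N → ℝ) : Prop := Summable fun x => |u x| ^ p

/-- the Nehari manifold. -/
def Nehari (N : ℕ) (p : ℝ) (V : Vtx N → ℝ) (f : Vtx N → ℝ → ℝ) : Set (Vtx N → ℝ) :=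
  {u | memE N p u ∧ u ≠ 0 ∧ PhiDeriv N p V f u u = 0}


/-- periodicity in one coordinate, all integer multiples -/
lemma per_coord {N : ℕ} (V : Vtx N → ℝ) (T : ℕ)
    (hA2V : ∀ x (i : Fin N), V (x + (T : ℤ) • Pi.single i 1) = V x)
    (i : Fin N) : ∀ (m : ℤ) (x : Vtx N), V (x + ((T : ℤ) * m) • Pi.single i 1) = V x := by
  intro m
  induction m using Int.induction_on with
  | zero => intro x; simp
  | succ m ih =>
      intro x
      have h1 : x + ((T:ℤ) * (m + 1)) • Pi.single i 1
          = (x + (T:ℤ) • Pi.single i 1) + ((T:ℤ) * m) • Pi.single i 1 := by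
        rw [mul_add, mul_one, add_smul]; abel
      rw [h1, ih, hA2V]
  | pred m ih =>
      intro x
      have h1 : x + ((T:ℤ) * (-m)) • Pi.single i 1
          = (x + ((T:ℤ) * (-m - 1)) • Pi.single i 1) + (T:ℤ) • Pi.single i 1 := by
        have : (T:ℤ) * (-m) = ((T:ℤ) * (-m-1)) + T := by ring
        rw [this, add_smul]; abel
      have h2 : V (x + ((T:ℤ) * (-(m:ℤ))) • Pi.single i 1)
          = V (x + ((T:ℤ) * (-(m:ℤ) - 1)) • Pi.single i 1) := by
        rw [h1]; exact hA2V _ i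
      exact h2.symm.trans (ih x)

lemma per_full {N : ℕ} (V : Vtx N → ℝ) (T : ℕ)
    (hA2V : ∀ x (i : Fin N), V (x + (T : ℤ) • Pi.single i 1) = V x)
    (k : Vtx N) (x : Vtx N) : V (x + (T : ℤ) • k) = V x := by
  have key : ∀ s : Finset (Fin N), ∀ x : Vtx N,
      V (x + (T:ℤ) • ∑ i ∈ s, Pi.single i (k i)) = V x := by
    intro s
    induction s using Finset.induction_on with
    | empty => intro x; simp
    | insert _ _ hnot ih =>
        rename_i a s'
        intro x
        rw [Finset.sum_insert hnot, smul_add]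
        have h1 : x + ((T:ℤ) • Pi.single a (k a) + (T:ℤ) • ∑ i ∈ s', Pi.single i (k i))
            = (x + (T:ℤ) • Pi.single a (k a)) + (T:ℤ) • ∑ i ∈ s', Pi.single i (k i) := by abel
        rw [h1, ih]
        have : ((T:ℤ) • Pi.single a (k a) : Vtx N) = ((T:ℤ) * (k a)) • Pi.single a (1:ℤ) := by
          funext j
          simp only [Pi.smul_apply, smul_eq_mul, Pi.single_apply]
          split <;> ring
        rw [this]
        exact per_coord V T hA2V a (k a) x
  have hk : ∑ i : Fin N, Pi.single i (k i) = k := Finset.univ_sum_single k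
  have := key Finset.univ x
  rwa [hk] at this

lemma V_bounds {N : ℕ} (V : Vtx N → ℝ) (T : ℕ) (hT : 0 < T)
    (hA2V : ∀ x (i : Fin N), V (x + (T : ℤ) • Pi.single i 1) = V x)
    (hVpos : ∀ x, 0 < V x) :
    ∃ V₀ V₁ : ℝ, 0 < V₀ ∧ ∀ x, V₀ ≤ V x ∧ V x ≤ V₁ := by
  classical
  set B : Finset (Vtx N) := Fintype.piFinset (fun _ => Finset.Icc (0:ℤ) (T-1)) with hB
  have hBne : B.Nonempty := by
    refine ⟨fun _ => 0, ?_⟩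
    simp [hB, Fintype.mem_piFinset]
    omega
  refine ⟨B.inf' hBne V, B.sup' hBne V, ?_, ?_⟩
  · obtain ⟨b, _, hb⟩ := Finset.exists_mem_eq_inf' hBne V
    rw [hb]; exact hVpos b
  · intro x
    have hTz : (T:ℤ) ≠ 0 := by exact_mod_cast hT.ne'
    have hred : V x = V (fun i => x i % (T:ℤ)) := by
      have hx : x = (fun i => x i % (T:ℤ)) + (T:ℤ) • (fun i => x i / (T:ℤ)) := by
        funext i
        simp only [Pi.add_apply, Pi.smul_apply, smul_eq_mul]
        have h := Int.mul_ediv_add_emod (x i) (T:ℤ)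
        linarith
      conv_lhs => rw [hx]
      exact per_full V T hA2V _ _
    have hmem : (fun i => x i % (T:ℤ)) ∈ B := by
      simp only [hB, Fintype.mem_piFinset, Finset.mem_Icc]
      intro i
      constructor
      · exact Int.emod_nonneg _ hTz
      · have := Int.emod_lt_of_pos (x i) (by exact_mod_cast hT : (0:ℤ) < T)
        omega
    rw [hred]
    exact ⟨Finset.inf'_le V hmem, Finset.le_sup' V hmem⟩

lemma f_growth {N : ℕ} (p q : ℝ) (hp : 1 < p) (hq : p < q)
    (f : Vtx N → ℝ → ℝ)
    (hA1 : ∃ a : ℝ, 0 < a ∧ ∀ x u, |f x u| ≤ a * (1 + |u| ^ (q - 1)))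
    (hA3 : ∀ ε > (0:ℝ), ∃ δ > (0:ℝ), ∀ x u, |u| < δ → |f x u| ≤ ε * |u| ^ (p - 1)) :
    ∀ ε > (0:ℝ), ∃ C > (0:ℝ), ∀ x t, |f x t| ≤ ε * |t| ^ (p - 1) + C * |t| ^ (q - 1) := by
  intro ε hε
  obtain ⟨a, ha, hA1'⟩ := hA1
  obtain ⟨δ, hδ, hA3'⟩ := hA3 ε hε
  refine ⟨a * (δ ^ (1 - q) + 1), by positivity, ?_⟩
  intro x t
  by_cases ht : |t| < δ
  · have h1 := hA3' x t ht
    have h2 : 0 ≤ a * (δ ^ (1-q) + 1) * |t| ^ (q-1) := by positivity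
    linarith
  · push_neg at ht
    have h1 := hA1' x t
    have hd : (1:ℝ) ≤ δ ^ (1-q) * |t| ^ (q-1) := by
      have h3 : δ ^ (q-1) ≤ |t| ^ (q-1) := Real.rpow_le_rpow hδ.le ht (by linarith)
      have h4 : δ ^ (1-q) * δ ^ (q-1) = 1 := by
        rw [← Real.rpow_add hδ]; norm_num
      calc (1:ℝ) = δ ^ (1-q) * δ ^ (q-1) := h4.symm
        _ ≤ δ ^ (1-q) * |t| ^ (q-1) := by
            have : (0:ℝ) ≤ δ ^ (1-q) := by positivity
            nlinarith
    have h5 : a * (1 + |t| ^ (q-1)) ≤ a * (δ ^ (1-q) * |t| ^ (q-1) + |t| ^ (q-1)) := by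
      have : (0:ℝ) ≤ |t| ^ (q-1) := by positivity
      nlinarith
    have h6 : (0:ℝ) ≤ ε * |t| ^ (p-1) := by positivity
    have : a * (δ ^ (1-q) * |t| ^ (q-1) + |t| ^ (q-1)) = a * (δ ^ (1-q) + 1) * |t| ^ (q-1) := by ring
    linarith

lemma F_growth {N : ℕ} (p q : ℝ) (hp : 1 < p) (hq : p < q)
    (f : Vtx N → ℝ → ℝ) (hfc : ∀ x, Continuous (f x))
    (ε C : ℝ) (hε : 0 < ε) (hC : 0 < C)
    (hb : ∀ x t, |f x t| ≤ ε * |t| ^ (p - 1) + C * |t| ^ (q - 1)) :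
    ∀ x t, |Fprim f x t| ≤ ε * |t| ^ p + C * |t| ^ q := by
  intro x t
  have key : |Fprim f x t| ≤ (ε * |t| ^ (p-1) + C * |t| ^ (q-1)) * |t - 0| := by
    have : ∀ s ∈ Set.uIoc (0:ℝ) t, ‖f x s‖ ≤ ε * |t| ^ (p-1) + C * |t| ^ (q-1) := by
      intro s hs
      have hst : |s| ≤ |t| := by
        rcases Set.mem_uIoc.mp hs with h | h
        · calc |s| = s := abs_of_pos h.1
            _ ≤ t := h.2
            _ ≤ |t| := le_abs_self t
        · calc |s| = -s := abs_of_nonpos h.2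
            _ ≤ -t := by linarith [h.1]
            _ ≤ |t| := neg_le_abs t
      calc ‖f x s‖ = |f x s| := rfl
        _ ≤ ε * |s| ^ (p-1) + C * |s| ^ (q-1) := hb x s
        _ ≤ ε * |t| ^ (p-1) + C * |t| ^ (q-1) := by
            have h1 : |s| ^ (p-1) ≤ |t| ^ (p-1) := Real.rpow_le_rpow (abs_nonneg s) hst (by linarith)
            have h2 : |s| ^ (q-1) ≤ |t| ^ (q-1) := Real.rpow_le_rpow (abs_nonneg s) hst (by linarith)
            nlinarith
    exact intervalIntegral.norm_integral_le_of_norm_le_const this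
  rw [sub_zero] at key
  rcases eq_or_ne t 0 with rfl | ht0
  · simp only [abs_zero]
    rw [Real.zero_rpow (by linarith), Real.zero_rpow (by linarith)]
    simpa using key
  · have habs : (0:ℝ) < |t| := abs_pos.mpr ht0
    have e1 : |t| ^ (p-1) * |t| = |t| ^ p := by
      have h := Real.rpow_add habs (p-1) 1
      rw [Real.rpow_one] at h
      have hpe : p - 1 + 1 = p := by ring
      rw [hpe] at h
      exact h.symm
    have e2 : |t| ^ (q-1) * |t| = |t| ^ q := by
      have h := Real.rpow_add habs (q-1) 1
      rw [Real.rpow_one] at h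
      have hqe : q - 1 + 1 = q := by ring
      rw [hqe] at h
      exact h.symm
    calc |Fprim f x t| ≤ (ε * |t| ^ (p-1) + C * |t| ^ (q-1)) * |t| := key
      _ = ε * (|t| ^ (p-1) * |t|) + C * (|t| ^ (q-1) * |t|) := by ring
      _ = ε * |t| ^ p + C * |t| ^ q := by rw [e1, e2]

lemma lq_emb {ι : Type*} [Countable ι] (p q : ℝ) (hp : 0 < p) (hq : p < q)
    (u : ι → ℝ) (hu : Summable fun x => |u x| ^ p) :
    Summable (fun x => |u x| ^ q) ∧
      ∑' x, |u x| ^ q ≤ (∑' x, |u x| ^ p) ^ (q / p) := by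
  set S := ∑' x, |u x| ^ p with hS
  have hSnn : 0 ≤ S := tsum_nonneg fun x => Real.rpow_nonneg (abs_nonneg _) _
  have hterm : ∀ x, |u x| ^ p ≤ S := fun x =>
    Summable.le_tsum hu x (fun j _ => Real.rpow_nonneg (abs_nonneg _) _)
  have hkey : ∀ x, |u x| ^ q ≤ |u x| ^ p * S ^ ((q - p)/p) := by
    intro x
    have h1 : |u x| ^ q = |u x| ^ p * |u x| ^ (q - p) := by
      rw [← Real.rpow_add' (abs_nonneg _) (ne_of_gt (by linarith : (0:ℝ) < p + (q - p)))]
      ring_nf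
    rw [h1]
    have h2 : |u x| ^ (q-p) = (|u x| ^ p) ^ ((q-p)/p) := by
      rw [← Real.rpow_mul (abs_nonneg _)]
      congr 1
      field_simp
    have h3 : (|u x| ^ p) ^ ((q-p)/p) ≤ S ^ ((q-p)/p) :=
      Real.rpow_le_rpow (Real.rpow_nonneg (abs_nonneg _) _) (hterm x) (div_nonneg (by linarith) hp.le)
    have h4 : (0:ℝ) ≤ |u x| ^ p := Real.rpow_nonneg (abs_nonneg _) _
    rw [h2]
    exact mul_le_mul_of_nonneg_left h3 h4
  have hsum : Summable fun x => |u x| ^ q := by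
    apply Summable.of_nonneg_of_le (fun x => Real.rpow_nonneg (abs_nonneg _) _) hkey
    exact hu.mul_right _
  refine ⟨hsum, ?_⟩
  calc ∑' x, |u x| ^ q ≤ ∑' x, |u x| ^ p * S ^ ((q-p)/p) :=
        Summable.tsum_le_tsum hkey hsum (hu.mul_right _)
    _ = S * S ^ ((q-p)/p) := by rw [tsum_mul_right]
    _ = S ^ (1 + (q-p)/p) := by
        rw [Real.rpow_add' hSnn (ne_of_gt (by have h5 : 0 < (q-p)/p := div_pos (by linarith) hp; linarith))]
        rw [Real.rpow_one]
    _ = S ^ (q/p) := by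
        congr 1
        field_simp
        ring

lemma rpow_int_aux (p a b : ℝ) (hp : 1 < p) (h0 : 0 < a) :
    ∫ r in a..b, r ^ (p - 1) = (b ^ p - a ^ p) / p := by
  have h := integral_rpow (a := a) (b := b) (r := p - 1) (Or.inl (by linarith))
  have hpe : p - 1 + 1 = p := by ring
  rw [hpe] at h
  exact h

lemma J_ineq {N : ℕ} (p : ℝ) (hp : 1 < p) (f : Vtx N → ℝ → ℝ)
    (x : Vtx N) (hfc : Continuous (f x))
    (hmono : StrictMonoOn (fun u => f x u / |u| ^ (p - 1)) (Set.Iio 0) ∧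
             StrictMonoOn (fun u => f x u / |u| ^ (p - 1)) (Set.Ioi 0))
    (s t : ℝ) (hs0 : 0 < s) (hs1 : s ≤ 1) :
    Fprim f x t - Fprim f x (s * t) ≤ ((1 - s ^ p) / p) * (f x t * t) := by
  have hsp1 : s ^ p ≤ 1 := Real.rpow_le_one hs0.le hs1 (by linarith)
  have hppos : (0:ℝ) < p := by linarith
  have hint : ∀ a b : ℝ, IntervalIntegrable (f x) MeasureTheory.volume a b :=
    fun a b => hfc.intervalIntegrable a b
  have hdiff : Fprim f x t - Fprim f x (s * t) = ∫ r in (s*t)..t, f x r :=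
    intervalIntegral.integral_interval_sub_left (hint 0 t) (hint 0 (s*t))
  rcases lt_trichotomy t 0 with htn | rfl | htp
  · -- t < 0
    have hstn : s * t < 0 := mul_neg_of_pos_of_neg hs0 htn
    have htle : t ≤ s * t := by nlinarith
    set M : ℝ := f x t / |t| ^ (p - 1) with hM
    have habs : (0:ℝ) < |t| := abs_pos.mpr htn.ne
    have hbound : ∀ r ∈ Set.Icc t (s*t), M * |r| ^ (p-1) ≤ f x r := by
      intro r hr
      have hrn : r < 0 := lt_of_le_of_lt hr.2 hstn
      have hrabs : (0:ℝ) < |r| ^ (p-1) := Real.rpow_pos_of_pos (abs_pos.mpr hrn.ne) _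
      have hle : M ≤ f x r / |r| ^ (p-1) := by
        rcases eq_or_lt_of_le hr.1 with rfl | hlt
        · exact le_rfl
        · exact (hmono.1 (Set.mem_Iio.mpr htn) (Set.mem_Iio.mpr hrn) hlt).le
      calc M * |r| ^ (p-1) ≤ (f x r / |r| ^ (p-1)) * |r| ^ (p-1) :=
            mul_le_mul_of_nonneg_right hle hrabs.le
        _ = f x r := div_mul_cancel₀ _ hrabs.ne'
    have hcont2 : ContinuousOn (fun r => M * |r| ^ (p-1)) (Set.uIcc t (s*t)) := by
      apply ContinuousOn.mul continuousOn_const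
      intro r hr
      have hrne : r ≠ 0 := by
        have : Set.uIcc t (s*t) = Set.Icc t (s*t) := Set.uIcc_of_le htle
        rw [this] at hr
        exact ne_of_lt (lt_of_le_of_lt hr.2 hstn)
      exact ((Real.continuousAt_rpow_const _ _ (Or.inl (abs_ne_zero.mpr hrne))).comp
        (continuous_abs.continuousAt)).continuousWithinAt
    have hintM : IntervalIntegrable (fun r => M * |r| ^ (p-1)) MeasureTheory.volume t (s*t) :=
      hcont2.intervalIntegrable
    have hmonoI : M * (∫ r in t..(s*t), |r| ^ (p-1)) ≤ ∫ r in t..(s*t), f x r := by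
      rw [← intervalIntegral.integral_const_mul]
      exact intervalIntegral.integral_mono_on htle hintM (hint t (s*t)) hbound
    have hIval : (∫ r in t..(s*t), |r| ^ (p-1)) = (|t| ^ p - s ^ p * |t| ^ p) / p := by
      have hcongr : (∫ r in t..(s*t), |r| ^ (p-1)) = ∫ r in t..(s*t), (-r) ^ (p-1) := by
        apply intervalIntegral.integral_congr
        intro r hr
        rw [Set.uIcc_of_le htle] at hr
        have : r ≤ 0 := le_trans hr.2 hstn.le
        simp [abs_of_nonpos this]
      rw [hcongr]
      have hcomp : (∫ r in t..(s*t), (-r) ^ (p-1)) = ∫ y in (-(s*t))..(-t), y ^ (p-1) :=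
        intervalIntegral.integral_comp_neg (fun y => y ^ (p-1))
      rw [hcomp, rpow_int_aux p _ _ hp (by linarith)]
      have h1 : (-t) ^ p = |t| ^ p := by rw [abs_of_nonpos htn.le]
      have h2 : (-(s*t)) ^ p = s ^ p * |t| ^ p := by
        have : -(s*t) = s * (-t) := by ring
        rw [this, Real.mul_rpow hs0.le (by linarith), abs_of_nonpos htn.le]
      rw [h1, h2]
    have hMt : M * |t| ^ p = -(f x t * t) := by
      have htp' : |t| ^ p = |t| ^ (p-1) * |t| := by
        have h := Real.rpow_add habs (p-1) 1
        rw [Real.rpow_one] at h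
        have hpe : p - 1 + 1 = p := by ring
        rw [hpe] at h
        exact h
      rw [hM, htp', ← mul_assoc, div_mul_cancel₀ _ (ne_of_gt (Real.rpow_pos_of_pos habs _)),
        abs_of_nonpos htn.le]
      ring
    rw [hdiff]
    have h3 : (∫ r in (s*t)..t, f x r) = -∫ r in t..(s*t), f x r :=
      (intervalIntegral.integral_symm _ _)
    rw [h3]
    have h4 : M * ((|t| ^ p - s ^ p * |t| ^ p) / p) = ((1 - s ^ p)/p) * (M * |t| ^ p) := by
      ring
    calc -∫ r in t..(s*t), f x r ≤ -(M * ((|t| ^ p - s ^ p * |t| ^ p) / p)) := by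
          rw [← hIval]; linarith [hmonoI]
      _ = ((1 - s ^ p)/p) * (-(M * |t| ^ p)) := by rw [h4]; ring
      _ = ((1 - s ^ p)/p) * (f x t * t) := by rw [hMt]; ring
  · simp [Fprim]
  · -- t > 0
    have hstp : 0 < s * t := mul_pos hs0 htp
    have htle : s * t ≤ t := by nlinarith
    set M : ℝ := f x t / |t| ^ (p - 1) with hM
    have habs : (0:ℝ) < |t| := abs_pos.mpr htp.ne'
    have hbound : ∀ r ∈ Set.Icc (s*t) t, f x r ≤ M * |r| ^ (p-1) := by
      intro r hr
      have hrp : 0 < r := lt_of_lt_of_le hstp hr.1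
      have hrabs : (0:ℝ) < |r| ^ (p-1) := Real.rpow_pos_of_pos (abs_pos.mpr hrp.ne') _
      have hle : f x r / |r| ^ (p-1) ≤ M := by
        rcases eq_or_lt_of_le hr.2 with rfl | hlt
        · exact le_rfl
        · exact (hmono.2 (Set.mem_Ioi.mpr hrp) (Set.mem_Ioi.mpr htp) hlt).le
      calc f x r = (f x r / |r| ^ (p-1)) * |r| ^ (p-1) := (div_mul_cancel₀ _ hrabs.ne').symm
        _ ≤ M * |r| ^ (p-1) := mul_le_mul_of_nonneg_right hle hrabs.le
    have hcont2 : ContinuousOn (fun r => M * |r| ^ (p-1)) (Set.uIcc (s*t) t) := by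
      apply ContinuousOn.mul continuousOn_const
      intro r hr
      have hrne : r ≠ 0 := by
        rw [Set.uIcc_of_le htle] at hr
        exact ne_of_gt (lt_of_lt_of_le hstp hr.1)
      exact ((Real.continuousAt_rpow_const _ _ (Or.inl (abs_ne_zero.mpr hrne))).comp
        (continuous_abs.continuousAt)).continuousWithinAt
    have hintM : IntervalIntegrable (fun r => M * |r| ^ (p-1)) MeasureTheory.volume (s*t) t :=
      hcont2.intervalIntegrable
    have hmonoI : (∫ r in (s*t)..t, f x r) ≤ M * ∫ r in (s*t)..t, |r| ^ (p-1) := by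
      rw [← intervalIntegral.integral_const_mul]
      exact intervalIntegral.integral_mono_on htle (hint (s*t) t) hintM hbound
    have hIval : (∫ r in (s*t)..t, |r| ^ (p-1)) = (|t| ^ p - s ^ p * |t| ^ p) / p := by
      have hcongr : (∫ r in (s*t)..t, |r| ^ (p-1)) = ∫ r in (s*t)..t, r ^ (p-1) := by
        apply intervalIntegral.integral_congr
        intro r hr
        rw [Set.uIcc_of_le htle] at hr
        have : 0 ≤ r := le_trans hstp.le hr.1
        simp [abs_of_nonneg this]
      rw [hcongr, rpow_int_aux p _ _ hp hstp]
      have h1 : t ^ p = |t| ^ p := by rw [abs_of_pos htp]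
      have h2 : (s*t) ^ p = s ^ p * |t| ^ p := by
        rw [Real.mul_rpow hs0.le htp.le, abs_of_pos htp]
      rw [h1, h2]
    have hMt : M * |t| ^ p = f x t * t := by
      have htp' : |t| ^ p = |t| ^ (p-1) * |t| := by
        have h := Real.rpow_add habs (p-1) 1
        rw [Real.rpow_one] at h
        have hpe : p - 1 + 1 = p := by ring
        rw [hpe] at h
        exact h
      rw [hM, htp', ← mul_assoc, div_mul_cancel₀ _ (ne_of_gt (Real.rpow_pos_of_pos habs _)),
        abs_of_pos htp]
    rw [hdiff]
    calc (∫ r in (s*t)..t, f x r) ≤ M * ((|t| ^ p - s ^ p * |t| ^ p) / p) := by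
          rw [← hIval]; exact hmonoI
      _ = ((1 - s ^ p)/p) * (M * |t| ^ p) := by ring
      _ = ((1 - s ^ p)/p) * (f x t * t) := by rw [hMt]

lemma pm_alg (p : ℝ) (hp : 1 < p) (d : ℝ) : |d| ^ (p-2) * d * d = |d| ^ p := by
  rcases eq_or_ne d 0 with rfl | hd
  · simp [Real.zero_rpow (ne_of_gt (by linarith : (0:ℝ) < p))]
  · have habs : 0 < |d| := abs_pos.mpr hd
    have h2 : |d| ^ (2:ℝ) = d * d := by
      rw [show (2:ℝ) = ((2:ℕ):ℝ) by norm_num, Real.rpow_natCast, sq_abs, sq]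
    have h := Real.rpow_add habs (p-2) 2
    rw [show p - 2 + 2 = p by ring, h2] at h
    rw [mul_assoc, ← h]

lemma rpow_mul_self (c : ℝ) (hc : 1 < c) (t : ℝ) : |t| ^ (c-1) * |t| = |t| ^ c := by
  rcases eq_or_ne t 0 with rfl | ht
  · simp [Real.zero_rpow (ne_of_gt (by linarith : (0:ℝ) < c))]
  · have habs : 0 < |t| := abs_pos.mpr ht
    have h := Real.rpow_add habs (c-1) 1
    rw [Real.rpow_one, show c - 1 + 1 = c by ring] at h
    exact h.symm

lemma eNormP_smul (N : ℕ) (p : ℝ) (hp : 0 < p) (V : Vtx N → ℝ) (u : Vtx N → ℝ)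
    (s : ℝ) (hs : 0 ≤ s) :
    eNormP N p V (fun x => s * u x) = s ^ p * eNormP N p V u := by
  unfold eNormP pEnergy
  have h1 : ∀ z : Vtx N × Vtx N,
      (if LatAdj z.1 z.2 then |s * u z.1 - s * u z.2| ^ p else 0)
      = s ^ p * (if LatAdj z.1 z.2 then |u z.1 - u z.2| ^ p else 0) := by
    intro z
    by_cases h : LatAdj z.1 z.2 <;> simp [h]
    rw [show s * u z.1 - s * u z.2 = s * (u z.1 - u z.2) by ring, abs_mul,
      Real.mul_rpow (abs_nonneg _) (abs_nonneg _), abs_of_nonneg hs]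
  have h2 : ∀ x, V x * |s * u x| ^ p = s ^ p * (V x * |u x| ^ p) := by
    intro x
    rw [abs_mul, Real.mul_rpow (abs_nonneg _) (abs_nonneg _), abs_of_nonneg hs]
    ring
  rw [tsum_congr h1, tsum_congr h2, tsum_mul_left, tsum_mul_left]
  ring
set_option maxHeartbeats 2000000 in
/-- the Nehari level is strictly positive: there are positive alpha, beta with
Phi >= beta on the sphere of radius alpha, and Phi >= beta on the Nehari manifold. -/
theorem stmt_16 (N : ℕ) (p q : ℝ) (hp : 1 < p) (hq : p < q)
    (V : Vtx N → ℝ) (f : Vtx N → ℝ → ℝ) (T : ℕ) (hT : 0 < T)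
    (hA1 : ∃ a : ℝ, 0 < a ∧ ∀ x u, |f x u| ≤ a * (1 + |u| ^ (q - 1)))
    (hfc : ∀ x, Continuous (f x))
    (hA2V : ∀ x (i : Fin N), V (x + (T : ℤ) • Pi.single i 1) = V x)
    (hA2f : ∀ x (i : Fin N) (u : ℝ), f (x + (T : ℤ) • Pi.single i 1) u = f x u)
    (hVpos : ∀ x, 0 < V x)
    (hA3 : ∀ ε > (0:ℝ), ∃ δ > (0:ℝ), ∀ x u, |u| < δ → |f x u| ≤ ε * |u| ^ (p - 1))
    (hA4 : ∀ x, StrictMonoOn (fun u => f x u / |u| ^ (p - 1)) (Set.Iio 0) ∧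
               StrictMonoOn (fun u => f x u / |u| ^ (p - 1)) (Set.Ioi 0))
    (hA5 : ∀ M : ℝ, ∃ R > (0:ℝ), ∀ x u, R ≤ |u| → M ≤ Fprim f x u / |u| ^ p) :
    ∃ α > (0:ℝ), ∃ β > (0:ℝ),
      (∀ u : Vtx N → ℝ, memE N p u → eNorm N p V u = α → β ≤ PhiFun N p V f u) ∧
      (∀ u ∈ Nehari N p V f, β ≤ PhiFun N p V f u) := by
  classical
  obtain ⟨V₀, V₁, hV₀, hVb⟩ := V_bounds V T hT hA2V hVpos
  have hppos : (0:ℝ) < p := by linarith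
  have hqp : (0:ℝ) < q - p := by linarith
  have hq0 : (0:ℝ) < q := by linarith
  set ε : ℝ := V₀ / (2*p) with hεdef
  have hε : 0 < ε := by positivity
  obtain ⟨C, hC, hfb⟩ := f_growth p q hp hq f hA1 hA3 ε hε
  have hFb : ∀ x t, |Fprim f x t| ≤ ε * |t| ^ p + C * |t| ^ q :=
    F_growth p q hp hq f hfc ε C hε hC hfb
  set C' : ℝ := C / V₀ ^ (q/p) with hC'def
  have hC' : 0 < C' := div_pos hC (Real.rpow_pos_of_pos hV₀ _)
  set A : ℝ := min ((1/(2*C')) ^ (p/(q-p))) ((1/(4*p*C')) ^ (p/(q-p))) with hAdef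
  have hA : 0 < A := lt_min (Real.rpow_pos_of_pos (by positivity) _)
    (Real.rpow_pos_of_pos (by positivity) _)
  -- pointwise growth bound on |u|-powers, and summability facts for u ∈ E
  have hbasic : ∀ u : Vtx N → ℝ, memE N p u →
      Summable (fun x => |u x| ^ q) ∧
      (∑' x, |u x| ^ q) ≤ (∑' x, |u x| ^ p) ^ (q/p) ∧
      Summable (fun x => V x * |u x| ^ p) ∧
      V₀ * (∑' x, |u x| ^ p) ≤ eNormP N p V u := by
    intro u hu
    have hu' : Summable fun x => |u x| ^ p := hu
    obtain ⟨hq1, hq2⟩ := lq_emb p q hppos hq u hu'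
    have hVs : Summable (fun x => V x * |u x| ^ p) := by
      apply Summable.of_nonneg_of_le
        (fun x => mul_nonneg (hVpos x).le (Real.rpow_nonneg (abs_nonneg _) _))
        (fun x => mul_le_mul_of_nonneg_right (hVb x).2 (Real.rpow_nonneg (abs_nonneg _) _))
        (hu'.mul_left V₁)
    refine ⟨hq1, hq2, hVs, ?_⟩
    have hpe : 0 ≤ pEnergy N p u := by
      unfold pEnergy
      apply mul_nonneg (by norm_num)
      apply tsum_nonneg
      intro z
      split
      · exact Real.rpow_nonneg (abs_nonneg _) _
      · exact le_rfl
    have h1 : V₀ * (∑' x, |u x| ^ p) = ∑' x, V₀ * |u x| ^ p := (tsum_mul_left).symm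
    have h2 : (∑' x, V₀ * |u x| ^ p) ≤ ∑' x, V x * |u x| ^ p :=
      Summable.tsum_le_tsum
        (fun x => mul_le_mul_of_nonneg_right (hVb x).1 (Real.rpow_nonneg (abs_nonneg _) _))
        (hu'.mul_left V₀) hVs
    unfold eNormP
    linarith
  -- summability and bound for F
  have hFS : ∀ u : Vtx N → ℝ, memE N p u →
      Summable (fun x => Fprim f x (u x)) ∧
      (∑' x, Fprim f x (u x)) ≤ ε * (∑' x, |u x| ^ p) + C * (∑' x, |u x| ^ q) := by
    intro u hu
    obtain ⟨hq1, _, _, _⟩ := hbasic u hu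
    have hbb : Summable (fun x => ε * |u x| ^ p + C * |u x| ^ q) :=
      (hu.mul_left ε).add (hq1.mul_left C)
    have habs : Summable (fun x => |Fprim f x (u x)|) :=
      Summable.of_nonneg_of_le (fun x => abs_nonneg _) (fun x => hFb x (u x)) hbb
    have hsum : Summable (fun x => Fprim f x (u x)) := habs.of_abs
    refine ⟨hsum, ?_⟩
    calc (∑' x, Fprim f x (u x)) ≤ ∑' x, (ε * |u x| ^ p + C * |u x| ^ q) :=
          Summable.tsum_le_tsum (fun x => le_trans (le_abs_self _) (hFb x (u x))) hsum hbb
      _ = ε * (∑' x, |u x| ^ p) + C * (∑' x, |u x| ^ q) := by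
          rw [Summable.tsum_add (hu.mul_left ε) (hq1.mul_left C), tsum_mul_left, tsum_mul_left]
  -- the core lower bound
  have core : ∀ u : Vtx N → ℝ, memE N p u →
      (1/(2*p)) * eNormP N p V u - C' * (eNormP N p V u) ^ (q/p) ≤ PhiFun N p V f u := by
    intro u hu
    obtain ⟨hq1, hq2, hVs, hE1⟩ := hbasic u hu
    obtain ⟨hFsum, hFle⟩ := hFS u hu
    set t := eNormP N p V u with htdef
    have hSp : 0 ≤ ∑' x, |u x| ^ p :=
      tsum_nonneg fun x => Real.rpow_nonneg (abs_nonneg _) _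
    have ht0 : 0 ≤ t := le_trans (mul_nonneg hV₀.le hSp) hE1
    have hSp2 : (∑' x, |u x| ^ p) ≤ t / V₀ := (le_div_iff₀' hV₀).mpr hE1
    have h1 : ε * (∑' x, |u x| ^ p) ≤ t / (2*p) := by
      have := mul_le_mul_of_nonneg_left hSp2 hε.le
      calc ε * (∑' x, |u x| ^ p) ≤ ε * (t / V₀) := this
        _ = t / (2*p) := by
            rw [hεdef]; field_simp
    have h2 : C * (∑' x, |u x| ^ q) ≤ C' * t ^ (q/p) := by
      have e1 : (∑' x, |u x| ^ q) ≤ (t / V₀) ^ (q/p) :=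
        le_trans hq2 (Real.rpow_le_rpow hSp hSp2 (div_nonneg hq0.le hppos.le))
      have e2 : (t / V₀) ^ (q/p) = t ^ (q/p) / V₀ ^ (q/p) := Real.div_rpow ht0 hV₀.le _
      calc C * (∑' x, |u x| ^ q) ≤ C * (t ^ (q/p) / V₀ ^ (q/p)) := by
            rw [← e2]; exact mul_le_mul_of_nonneg_left e1 hC.le
        _ = C' * t ^ (q/p) := by rw [hC'def]; ring
    have hPhi : PhiFun N p V f u = (1/p) * t - ∑' x, Fprim f x (u x) := rfl
    rw [hPhi]
    have : (1/p) * t - (t/(2*p) + C' * t ^ (q/p)) = (1/(2*p)) * t - C' * t ^ (q/p) := by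
      field_simp
      ring
    linarith
  -- the sphere bound at level A
  have sphereA : ∀ u : Vtx N → ℝ, memE N p u → eNormP N p V u = A →
      (1/(4*p)) * A ≤ PhiFun N p V f u := by
    intro u hu hEA
    have hcore := core u hu
    rw [hEA] at hcore
    have hA2 : A ≤ (1/(4*p*C')) ^ (p/(q-p)) := min_le_right _ _
    have key : C' * A ^ (q/p) ≤ (1/(4*p)) * A := by
      have e1 : A ^ (q/p) = A ^ ((q-p)/p) * A := by
        have h := Real.rpow_add hA ((q-p)/p) 1
        rw [Real.rpow_one, show (q-p)/p + 1 = q/p by field_simp; ring] at h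
        exact h
      have e2 : A ^ ((q-p)/p) ≤ 1/(4*p*C') := by
        have h3 : A ^ ((q-p)/p) ≤ ((1/(4*p*C')) ^ (p/(q-p))) ^ ((q-p)/p) :=
          Real.rpow_le_rpow hA.le hA2 (by positivity)
        have h4 : ((1/(4*p*C')) ^ (p/(q-p))) ^ ((q-p)/p) = 1/(4*p*C') := by
          rw [← Real.rpow_mul (by positivity)]
          rw [show (p/(q-p)) * ((q-p)/p) = 1 by field_simp, Real.rpow_one]
        linarith
      calc C' * A ^ (q/p) = C' * A ^ ((q-p)/p) * A := by rw [e1]; ring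
        _ ≤ C' * (1/(4*p*C')) * A :=
            mul_le_mul_of_nonneg_right (mul_le_mul_of_nonneg_left e2 hC'.le) hA.le
        _ = (1/(4*p)) * A := by field_simp
    have : (1/(2*p)) * A - (1/(4*p)) * A = (1/(4*p)) * A := by ring
    linarith
  refine ⟨A ^ (1/p), Real.rpow_pos_of_pos hA _, (1/(4*p)) * A, by positivity, ?_, ?_⟩
  · -- sphere statement
    intro u hu hnorm
    apply sphereA u hu
    have ht0 : 0 ≤ eNormP N p V u := by
      obtain ⟨_, _, _, hE1⟩ := hbasic u hu
      have hSp : 0 ≤ ∑' x, |u x| ^ p :=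
        tsum_nonneg fun x => Real.rpow_nonneg (abs_nonneg _) _
      exact le_trans (mul_nonneg hV₀.le hSp) hE1
    have h1 : ((eNormP N p V u) ^ (1/p)) ^ p = eNormP N p V u := by
      rw [← Real.rpow_mul ht0, show (1/p) * p = 1 by field_simp, Real.rpow_one]
    have h2 : ((A : ℝ) ^ (1/p)) ^ p = A := by
      rw [← Real.rpow_mul hA.le, show (1/p) * p = 1 by field_simp, Real.rpow_one]
    have := hnorm
    unfold eNorm at this
    rw [← h1, this, h2]
  · -- Nehari statement
    rintro u ⟨hu, hne, hder⟩
    obtain ⟨hq1, hq2, hVs, hE1⟩ := hbasic u hu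
    obtain ⟨hFsum, hFle⟩ := hFS u hu
    set t := eNormP N p V u with htdef
    -- Step 1 : the Nehari identity
    have hgp : gradPair N p u u = pEnergy N p u := by
      unfold gradPair pEnergy
      congr 1
      apply tsum_congr
      intro z
      by_cases h : LatAdj z.1 z.2 <;> simp only [h, if_true, if_false]
      rw [pm_alg p hp (u z.2 - u z.1), abs_sub_comm]
    have hVt : (∑' x, V x * |u x| ^ (p - 2) * u x * u x) = ∑' x, V x * |u x| ^ p := by
      apply tsum_congr
      intro x
      rw [← pm_alg p hp (u x)]
      ring
    have hident : t = ∑' x, f x (u x) * u x := by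
      unfold PhiDeriv at hder
      rw [hgp, hVt] at hder
      rw [htdef]
      unfold eNormP
      linarith
    -- Step 2 : positivity of the norm
    have hx0 : ∃ x, u x ≠ 0 := by
      by_contra h
      push_neg at h
      exact hne (funext h)
    obtain ⟨x₀, hx₀⟩ := hx0
    have hSp : 0 ≤ ∑' x, |u x| ^ p :=
      tsum_nonneg fun x => Real.rpow_nonneg (abs_nonneg _) _
    have hSp_pos : 0 < ∑' x, |u x| ^ p :=
      lt_of_lt_of_le (Real.rpow_pos_of_pos (abs_pos.mpr hx₀) p)
        (Summable.le_tsum hu x₀ fun j _ => Real.rpow_nonneg (abs_nonneg _) _)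
    have ht_pos : 0 < t := lt_of_lt_of_le (mul_pos hV₀ hSp_pos) hE1
    -- Step 3 : summability of f(x,u)u
    have hfu_bound : ∀ x, |f x (u x) * u x| ≤ ε * |u x| ^ p + C * |u x| ^ q := by
      intro x
      rw [abs_mul]
      calc |f x (u x)| * |u x| ≤ (ε * |u x| ^ (p-1) + C * |u x| ^ (q-1)) * |u x| :=
            mul_le_mul_of_nonneg_right (hfb x (u x)) (abs_nonneg _)
        _ = ε * (|u x| ^ (p-1) * |u x|) + C * (|u x| ^ (q-1) * |u x|) := by ring
        _ = ε * |u x| ^ p + C * |u x| ^ q := by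
            rw [rpow_mul_self p hp, rpow_mul_self q (by linarith)]
    have hbb : Summable (fun x => ε * |u x| ^ p + C * |u x| ^ q) :=
      (hu.mul_left ε).add (hq1.mul_left C)
    have hfu_sum : Summable (fun x => f x (u x) * u x) :=
      (Summable.of_nonneg_of_le (fun x => abs_nonneg _) hfu_bound hbb).of_abs
    -- Step 4 : lower bound on t
    have hSp2 : (∑' x, |u x| ^ p) ≤ t / V₀ := (le_div_iff₀' hV₀).mpr hE1
    have h4 : t ≤ t/(2*p) + C' * t ^ (q/p) := by
      have hle : t ≤ ε * (∑' x, |u x| ^ p) + C * (∑' x, |u x| ^ q) := by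
        rw [hident]
        calc (∑' x, f x (u x) * u x) ≤ ∑' x, (ε * |u x| ^ p + C * |u x| ^ q) :=
              Summable.tsum_le_tsum (fun x => le_trans (le_abs_self _) (hfu_bound x)) hfu_sum hbb
          _ = ε * (∑' x, |u x| ^ p) + C * (∑' x, |u x| ^ q) := by
              rw [Summable.tsum_add (hu.mul_left ε) (hq1.mul_left C), tsum_mul_left, tsum_mul_left]
      have h1 : ε * (∑' x, |u x| ^ p) ≤ t / (2*p) := by
        calc ε * (∑' x, |u x| ^ p) ≤ ε * (t / V₀) := mul_le_mul_of_nonneg_left hSp2 hε.le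
          _ = t / (2*p) := by rw [hεdef]; field_simp
      have h2 : C * (∑' x, |u x| ^ q) ≤ C' * t ^ (q/p) := by
        have e1 : (∑' x, |u x| ^ q) ≤ (t / V₀) ^ (q/p) :=
          le_trans hq2 (Real.rpow_le_rpow hSp hSp2 (div_nonneg hq0.le hppos.le))
        have e2 : (t / V₀) ^ (q/p) = t ^ (q/p) / V₀ ^ (q/p) := Real.div_rpow ht_pos.le hV₀.le _
        calc C * (∑' x, |u x| ^ q) ≤ C * (t ^ (q/p) / V₀ ^ (q/p)) := by
              rw [← e2]; exact mul_le_mul_of_nonneg_left e1 hC.le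
          _ = C' * t ^ (q/p) := by rw [hC'def]; ring
      linarith
    have hAt : A ≤ t := by
      have h5 : t/2 ≤ C' * t ^ (q/p) := by
        have : t/(2*p) ≤ t/2 := by
          rw [div_le_div_iff₀ (by positivity) (by norm_num)]
          nlinarith [mul_nonneg ht_pos.le (by linarith : (0:ℝ) ≤ p - 1)]
        linarith
      have e1 : t ^ (q/p) = t ^ ((q-p)/p) * t := by
        have h := Real.rpow_add ht_pos ((q-p)/p) 1
        rw [Real.rpow_one, show (q-p)/p + 1 = q/p by field_simp; ring] at h
        exact h
      have h6 : 1/2 ≤ C' * t ^ ((q-p)/p) := by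
        rw [e1] at h5
        have := (mul_le_mul_iff_of_pos_right ht_pos).mp (by linarith [h5] : (1/2) * t ≤ (C' * t ^ ((q-p)/p)) * t)
        linarith
      have h7 : 1/(2*C') ≤ t ^ ((q-p)/p) := by
        rw [show 1/(2*C') = (1/2)/C' by ring, div_le_iff₀ hC']
        linarith
      have h8 : (1/(2*C')) ^ (p/(q-p)) ≤ t := by
        have h9 : ((1/(2*C')) : ℝ) ^ (p/(q-p)) ≤ (t ^ ((q-p)/p)) ^ (p/(q-p)) :=
          Real.rpow_le_rpow (by positivity) h7 (by positivity)
        have h10 : (t ^ ((q-p)/p)) ^ (p/(q-p)) = t := by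
          rw [← Real.rpow_mul ht_pos.le, show ((q-p)/p) * (p/(q-p)) = 1 by field_simp,
            Real.rpow_one]
        linarith [h9, h10.le, h10.ge]
      exact le_trans (min_le_left _ _) h8
    -- Step 5 : scale down to the sphere
    set s : ℝ := (A/t) ^ (1/p) with hsdef
    have hs0 : 0 < s := Real.rpow_pos_of_pos (div_pos hA ht_pos) _
    have hs1 : s ≤ 1 := Real.rpow_le_one (by positivity) ((div_le_one ht_pos).mpr hAt)
      (by positivity)
    have hsp : s ^ p = A/t := by
      rw [hsdef, ← Real.rpow_mul (by positivity), show (1/p) * p = 1 by field_simp,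
        Real.rpow_one]
    have hmemE' : memE N p (fun x => s * u x) := by
      have : Summable (fun x => s ^ p * |u x| ^ p) := hu.mul_left _
      apply this.congr
      intro x
      rw [abs_mul, Real.mul_rpow (abs_nonneg _) (abs_nonneg _), abs_of_nonneg hs0.le]
    have hE' : eNormP N p V (fun x => s * u x) = A := by
      rw [eNormP_smul N p hppos V u s hs0.le, hsp, ← htdef, div_mul_cancel₀ _ ht_pos.ne']
    have hβ' : (1/(4*p)) * A ≤ PhiFun N p V f (fun x => s * u x) := sphereA _ hmemE' hE'
    -- Step 6 : Φ(su) ≤ Φ(u)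
    have hstep6 : PhiFun N p V f (fun x => s * u x) ≤ PhiFun N p V f u := by
      have hF'sum : Summable (fun x => Fprim f x (s * u x)) := by
        apply Summable.of_abs
        apply Summable.of_nonneg_of_le (fun x => abs_nonneg _) _ hbb
        intro x
        calc |Fprim f x (s * u x)| ≤ ε * |s * u x| ^ p + C * |s * u x| ^ q := hFb x _
          _ ≤ ε * |u x| ^ p + C * |u x| ^ q := by
              have hs' : |s * u x| ≤ |u x| := by
                rw [abs_mul, abs_of_nonneg hs0.le]
                nlinarith [abs_nonneg (u x)]
              have b1 : |s * u x| ^ p ≤ |u x| ^ p :=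
                Real.rpow_le_rpow (abs_nonneg _) hs' hppos.le
              have b2 : |s * u x| ^ q ≤ |u x| ^ q :=
                Real.rpow_le_rpow (abs_nonneg _) hs' (by linarith)
              nlinarith
      have hJ : ∀ x, Fprim f x (u x) - Fprim f x (s * u x)
          ≤ ((1 - s ^ p)/p) * (f x (u x) * u x) :=
        fun x => J_ineq p hp f x (hfc x) (hA4 x) s (u x) hs0 hs1
      have hsub : (∑' x, (Fprim f x (u x) - Fprim f x (s * u x)))
          ≤ ((1 - s ^ p)/p) * ∑' x, f x (u x) * u x := by
        rw [← tsum_mul_left]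
        exact Summable.tsum_le_tsum hJ (hFsum.sub hF'sum) (hfu_sum.mul_left _)
      have hsplit : (∑' x, (Fprim f x (u x) - Fprim f x (s * u x)))
          = (∑' x, Fprim f x (u x)) - ∑' x, Fprim f x (s * u x) :=
        Summable.tsum_sub hFsum hF'sum
      have hPhi1 : PhiFun N p V f u = (1/p) * t - ∑' x, Fprim f x (u x) := rfl
      have hPhi2 : PhiFun N p V f (fun x => s * u x)
          = (1/p) * (s ^ p * t) - ∑' x, Fprim f x (s * u x) := by
        unfold PhiFun
        rw [eNormP_smul N p hppos V u s hs0.le, ← htdef]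
      rw [hPhi1, hPhi2]
      rw [hsplit] at hsub
      rw [← hident] at hsub
      have hring : ((1 - s ^ p)/p) * t = (1/p) * t - (1/p) * (s ^ p * t) := by ring
      linarith [hsub]
    exact le_trans hβ' hstep6
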